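/- Let F : ℝⁿ → Set ℝⁿ, let X_o, X_u ⊆ ℝⁿ, and let B : ℝⁿ → ℝ be a barrier function candidate with respect to (X_o, X_u) with zero-sublevel set K. Suppose there exists an open neighborhood U of ∂K such that for every solution φ of ẋ ∈ F(x) whose range is contained in U, the map t ↦ B(φ(t)) is nonincreasing on the domain of φ. Then the system ẋ ∈ F(x) is safe with respect to (X_o, X_u). -/

import Mathlib

open Metric Set Filter MeasureTheory
open scoped Pointwise RealInnerProductSpace Topology

variable {E : Type*} [NormedAddCommGroup E] [NormedSpace ℝ E]

/-- Admissible solution domains: `[0,T]`, `[0,T)`, or `[0,∞)`. -/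
def SolDomain (D : Set ℝ) : Prop :=
  (∃ T : ℝ, 0 ≤ T ∧ D = Set.Icc 0 T) ∨ (∃ T : ℝ, 0 < T ∧ D = Set.Ico 0 T) ∨ D = Set.Ici 0

/-- `φ` is a (locally absolutely continuous) solution of `ẋ ∈ F x` on `D`,
expressed in integral form: `φ t = φ 0 + ∫₀ᵗ v`, with `v t ∈ F (φ t)` a.e. on `D`. -/
def IsSolutionOn (F : E → Set E) (φ : ℝ → E) (D : Set ℝ) : Prop :=
  SolDomain D ∧ ∃ v : ℝ → E,
    (∀ t ∈ D, MeasureTheory.IntegrableOn v (Set.Icc 0 t)) ∧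
    (∀ t ∈ D, φ t = φ 0 + ∫ s in (0:ℝ)..t, v s) ∧
    (∀ᵐ t ∂(MeasureTheory.volume.restrict D), v t ∈ F (φ t))

/-- Safety: no solution starting in `Xo` ever reaches `Xu`. -/
def Safe (F : E → Set E) (Xo Xu : Set E) : Prop :=
  ∀ (φ : ℝ → E) (D : Set ℝ), IsSolutionOn F φ D → φ 0 ∈ Xo → ∀ t ∈ D, φ t ∉ Xu

/-- Forward invariance of `K`. -/
def ForwardInvariant (F : E → Set E) (K : Set E) : Prop :=
  ∀ (φ : ℝ → E) (D : Set ℝ), IsSolutionOn F φ D → φ 0 ∈ K → ∀ t ∈ D, φ t ∈ K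

/-- Image of a set under a set-valued map: `F(S) = ⋃_{y ∈ S} F(y)`. -/
def svImage (F : E → Set E) (S : Set E) : Set E := ⋃ y ∈ S, F y

/-- Right-hand side of the strongly perturbed system `Σ^s_ε`:
`conv (F (x + ε(x)𝔹)) + ε(x)𝔹`. -/
def strongPert (F : E → Set E) (ε : E → ℝ) (x : E) : Set E :=
  convexHull ℝ (svImage F (Metric.closedBall x (ε x))) + Metric.closedBall (0:E) (ε x)

/-- Right-hand side of the (ordinary) perturbed system `Σ_ε`: `F x + ε(x)𝔹`. -/
def pert (F : E → Set E) (ε : E → ℝ) (x : E) : Set E :=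
  F x + Metric.closedBall (0:E) (ε x)

def RobustlySafe (F : E → Set E) (Xo Xu : Set E) : Prop :=
  ∃ ε : E → ℝ, Continuous ε ∧ (∀ x, 0 < ε x) ∧ Safe (pert F ε) Xo Xu

def StronglyRobustlySafe (F : E → Set E) (Xo Xu : Set E) : Prop :=
  ∃ ε : E → ℝ, Continuous ε ∧ (∀ x, 0 < ε x) ∧ Safe (strongPert F ε) Xo Xu

def UniformlyStronglyRobustlySafe (F : E → Set E) (Xo Xu : Set E) : Prop :=
  ∃ ε : ℝ, 0 < ε ∧ Safe (strongPert F (fun _ => ε)) Xo Xu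

/-- Upper semicontinuity of a set-valued map. -/
def UpperSemicontinuousSV (F : E → Set E) : Prop :=
  ∀ x : E, ∀ U : Set E, IsOpen U → F x ⊆ U → ∀ᶠ y in nhds x, F y ⊆ U

/-- Lower semicontinuity of a set-valued map (sequential form). -/
def LowerSemicontinuousSV (F : E → Set E) : Prop :=
  ∀ x : E, ∀ y ∈ F x, ∀ u : ℕ → E, Filter.Tendsto u Filter.atTop (nhds x) →
    ∃ v : ℕ → E, (∀ i, v i ∈ F (u i)) ∧ Filter.Tendsto v Filter.atTop (nhds y)

/-- If `B` is a barrier function candidate and there is an open neighborhood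
`U` of `∂K` such that `B` is nonincreasing along every solution that remains in `U`,
then `ẋ ∈ F x` is safe with respect to `(X_o, X_u)`. -/
theorem stmt10 {n : ℕ} (F : EuclideanSpace ℝ (Fin n) → Set (EuclideanSpace ℝ (Fin n)))
    (Xo Xu : Set (EuclideanSpace ℝ (Fin n))) (B : EuclideanSpace ℝ (Fin n) → ℝ)
    (hBu : ∀ x ∈ Xu, 0 < B x) (hBo : ∀ x ∈ Xo, B x ≤ 0)
    (U : Set (EuclideanSpace ℝ (Fin n))) (hUopen : IsOpen U)
    (hU : frontier {x | B x ≤ 0} ⊆ U)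
    (hmono : ∀ (φ : ℝ → EuclideanSpace ℝ (Fin n)) (D : Set ℝ), IsSolutionOn F φ D →
      (∀ t ∈ D, φ t ∈ U) → ∀ s ∈ D, ∀ t ∈ D, s ≤ t → B (φ t) ≤ B (φ s)) :
    Safe F Xo Xu := by
  intro φ D hsol hx0 t ht htXu
  obtain ⟨hD, v, hvint, hφeq, hae⟩ := hsol
  set K : Set (EuclideanSpace ℝ (Fin n)) := {x | B x ≤ 0} with hKdef
  have ht0 : 0 ≤ t := by
    rcases hD with ⟨T, hT, rfl⟩ | ⟨T, hT, rfl⟩ | rfl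
    · exact ht.1
    · exact ht.1
    · exact ht
  have hIcc : Icc (0:ℝ) t ⊆ D := by
    rcases hD with ⟨T, hT, rfl⟩ | ⟨T, hT, rfl⟩ | rfl
    · exact fun s hs => ⟨hs.1, hs.2.trans ht.2⟩
    · exact fun s hs => ⟨hs.1, lt_of_le_of_lt hs.2 ht.2⟩
    · exact fun s hs => hs.1
  have hDmeas : MeasurableSet D := by
    rcases hD with ⟨T, hT, rfl⟩ | ⟨T, hT, rfl⟩ | rfl
    · exact measurableSet_Icc
    · exact measurableSet_Ico
    · exact measurableSet_Ici
  have hφ0K : φ 0 ∈ K := hBo _ hx0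
  have hφtK : φ t ∉ K := not_le.2 (hBu _ htXu)
  -- continuity of φ on [0, t]
  have hvt : MeasureTheory.IntegrableOn v (Icc 0 t) := hvint t ht
  have hcont : ContinuousOn φ (Icc 0 t) := by
    have h1 : ContinuousOn (fun s => φ 0 + ∫ u in (0:ℝ)..s, v u) (Icc 0 t) := by
      apply continuousOn_const.add
      have := intervalIntegral.continuousOn_primitive_interval (a := (0:ℝ)) (b := t)
        (μ := MeasureTheory.volume) (f := v) (by rwa [uIcc_of_le ht0])
      rwa [uIcc_of_le ht0] at this
    exact h1.congr fun s hs => hφeq s (hIcc hs)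
  -- the last time in K
  set S : Set ℝ := {s | s ∈ Icc (0:ℝ) t ∧ φ s ∈ K} with hSdef
  have hSne : S.Nonempty := ⟨0, ⟨le_rfl, ht0⟩, hφ0K⟩
  have hSbdd : BddAbove S := ⟨t, fun s hs => hs.1.2⟩
  set σ : ℝ := sSup S with hσdef
  have hσmem : σ ∈ Icc (0:ℝ) t :=
    ⟨le_csSup hSbdd ⟨⟨le_rfl, ht0⟩, hφ0K⟩, csSup_le hSne fun s hs => hs.1.2⟩
  have hσclos : φ σ ∈ closure K := by
    have h1 : ContinuousWithinAt φ S σ :=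
      (hcont σ hσmem).mono fun s hs => hs.1
    have h2 : σ ∈ closure S := csSup_mem_closure hSne hSbdd
    have := h1.mem_closure_image h2
    refine closure_mono ?_ this
    rintro x ⟨s, hs, rfl⟩
    exact hs.2
  have hσnotint : φ σ ∉ interior K := by
    intro hint
    rcases eq_or_lt_of_le hσmem.2 with heq | hlt
    · exact hφtK (heq ▸ interior_subset hint)
    · have h1 : φ ⁻¹' interior K ∈ 𝓝[Icc (0:ℝ) t] σ :=
        (hcont σ hσmem) (isOpen_interior.mem_nhds hint)
      have hsub : Ioc σ t ⊆ Icc (0:ℝ) t := fun s hs => ⟨hσmem.1.trans hs.1.le, hs.2⟩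
      have h2 : φ ⁻¹' interior K ∈ 𝓝[Ioc σ t] σ := nhdsWithin_mono σ hsub h1
      have h3 : (Ioc σ t ∩ φ ⁻¹' interior K).Nonempty := by
        have : (𝓝[Ioc σ t] σ).NeBot := left_nhdsWithin_Ioc_neBot hlt
        exact Filter.nonempty_of_mem (Filter.inter_mem self_mem_nhdsWithin h2)
      obtain ⟨s, hs1, hs2⟩ := h3
      have : s ∈ S := ⟨⟨hσmem.1.trans hs1.1.le, hs1.2⟩, interior_subset hs2⟩
      exact absurd (le_csSup hSbdd this) (not_le.2 hs1.1)
  have hσU : φ σ ∈ U := hU ⟨hσclos, hσnotint⟩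
  -- pick δ so that φ maps a δ-window around σ into U
  obtain ⟨δ, hδpos, hδ⟩ := Metric.mem_nhdsWithin_iff.1
    ((hcont σ hσmem) (hUopen.mem_nhds hσU))
  -- pick a ∈ S close to σ
  obtain ⟨a, haS, halt⟩ := exists_lt_of_lt_csSup hSne (by linarith : σ - δ/2 < σ)
  have haσ : a ≤ σ := le_csSup hSbdd haS
  -- pick b just after σ, not in K
  set b : ℝ := min (σ + δ/2) t with hbdef
  have hσb : σ ≤ b := le_min (by linarith) hσmem.2
  have hbt : b ≤ t := min_le_right _ _
  have hab : a ≤ b := haσ.trans hσb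
  have hbδ : b ≤ σ + δ/2 := min_le_left _ _
  have hbK : φ b ∉ K := by
    rcases eq_or_lt_of_le hσmem.2 with heq | hlt
    · have : b = t := le_antisymm hbt (le_min (by linarith) le_rfl)
      rw [this]; exact hφtK
    · intro hbK
      have hσb' : σ < b := lt_min (by linarith) hlt
      have : b ∈ S := ⟨⟨haS.1.1.trans hab, hbt⟩, hbK⟩
      exact absurd (le_csSup hSbdd this) (not_le.2 hσb')
  have hsubU : ∀ s ∈ Icc a b, φ s ∈ U := by
    intro s hs
    apply hδ
    refine ⟨?_, haS.1.1.trans hs.1, hs.2.trans hbt⟩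
    rw [Metric.mem_ball, Real.dist_eq, abs_lt]
    constructor <;> nlinarith [hs.1, hs.2]
  -- shifted solution
  set ψ : ℝ → EuclideanSpace ℝ (Fin n) := fun s => φ (a + s) with hψdef
  have ha0 : (0:ℝ) ≤ a := haS.1.1
  have hIab : ∀ s ∈ Icc (0:ℝ) (b - a), a + s ∈ Icc (0:ℝ) t :=
    fun s hs => ⟨by linarith [hs.1], by linarith [hs.2]⟩
  have hsol' : IsSolutionOn F ψ (Icc 0 (b - a)) := by
    refine ⟨Or.inl ⟨b - a, by linarith, rfl⟩, fun s => v (a + s), ?_, ?_, ?_⟩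
    · intro s hs
      have h1 : IntervalIntegrable v MeasureTheory.volume a (a + s) := by
        apply (hvt.mono_set ?_).intervalIntegrable
        rw [uIcc_of_le (by linarith [hs.1])]
        exact fun u hu => ⟨ha0.trans hu.1, hu.2.trans (by linarith [hs.2])⟩
      have h2 := (h1.comp_add_left a)
      simp only [sub_self, add_sub_cancel_left] at h2
      rw [← intervalIntegrable_iff_integrableOn_Icc_of_le hs.1]
      exact h2
    · intro s hs
      have hmem : a + s ∈ Icc (0:ℝ) t := hIab s hs
      have e1 : φ (a + s) = φ 0 + ∫ u in (0:ℝ)..(a+s), v u := hφeq _ (hIcc hmem)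
      have e2 : φ a = φ 0 + ∫ u in (0:ℝ)..a, v u := hφeq _ (hIcc ⟨ha0, by linarith⟩)
      have i1 : IntervalIntegrable v MeasureTheory.volume 0 a := by
        apply (hvt.mono_set ?_).intervalIntegrable
        rw [uIcc_of_le ha0]
        exact fun u hu => ⟨hu.1, hu.2.trans (by linarith)⟩
      have i2 : IntervalIntegrable v MeasureTheory.volume a (a + s) := by
        apply (hvt.mono_set ?_).intervalIntegrable
        rw [uIcc_of_le (by linarith [hs.1])]
        exact fun u hu => ⟨ha0.trans hu.1, hu.2.trans (by linarith [hs.2])⟩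
      have e3 : (∫ u in (0:ℝ)..(a+s), v u)
          = (∫ u in (0:ℝ)..a, v u) + ∫ u in a..(a+s), v u :=
        (intervalIntegral.integral_add_adjacent_intervals i1 i2).symm
      have e4 : (∫ u in (0:ℝ)..s, v (a + u)) = ∫ u in a..(a+s), v u := by
        rw [intervalIntegral.integral_comp_add_left, add_zero]
      show φ (a + s) = φ (a + 0) + ∫ u in (0:ℝ)..s, v (a + u)
      rw [add_zero, e1, e2, e3, e4, add_assoc]
    · -- a.e. membership
      rw [MeasureTheory.ae_iff] at hae ⊢
      rw [MeasureTheory.Measure.restrict_apply' hDmeas] at hae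
      rw [MeasureTheory.Measure.restrict_apply' measurableSet_Icc]
      have key : {s | ¬ v (a + s) ∈ F (ψ s)} ∩ Icc 0 (b - a)
          ⊆ (fun s => a + s) ⁻¹' ({s | ¬ v s ∈ F (φ s)} ∩ D) := by
        rintro s ⟨h1, h2⟩
        exact ⟨h1, hIcc (hIab s h2)⟩
      refine le_antisymm ?_ zero_le
      calc MeasureTheory.volume ({s | ¬ v (a + s) ∈ F (ψ s)} ∩ Icc 0 (b - a))
          ≤ MeasureTheory.volume ((fun s => a + s) ⁻¹' ({s | ¬ v s ∈ F (φ s)} ∩ D)) :=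
            MeasureTheory.measure_mono key
        _ = MeasureTheory.volume ({s | ¬ v s ∈ F (φ s)} ∩ D) :=
            MeasureTheory.measure_preimage_add _ _ _
        _ = 0 := hae
  have hmem0 : (0:ℝ) ∈ Icc (0:ℝ) (b - a) := ⟨le_rfl, by linarith⟩
  have hmemba : b - a ∈ Icc (0:ℝ) (b - a) := ⟨by linarith, le_rfl⟩
  have hkey := hmono ψ (Icc 0 (b - a)) hsol'
    (fun s hs => hsubU (a + s) ⟨by linarith [hs.1], by linarith [hs.2]⟩)
    0 hmem0 (b - a) hmemba (by linarith)
  have hBa : B (φ a) ≤ 0 := haS.2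
  have : B (φ b) ≤ 0 := by
    have e : ψ (b - a) = φ b := by rw [hψdef]; ring_nf
    have e0 : ψ 0 = φ a := by rw [hψdef]; ring_nf
    rw [e, e0] at hkey
    linarith
  exact hbK this
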